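/- An infinite virtually cyclic group of type II does not admit any surjective group homomorphism onto the infinite cyclic group ℤ; that is, no infinite virtually cyclic group is both of type I and of type II. -/

import Mathlib

/-- A group is virtually cyclic if it contains a cyclic subgroup of finite index. -/
def VirtuallyCyclic (G : Type*) [Group G] : Prop :=
  ∃ H : Subgroup G, IsCyclic ↥H ∧ H.FiniteIndex

/-- An infinite virtually cyclic group is of type I if it admits a surjective
homomorphism onto the infinite cyclic group ℤ. -/
def IsTypeI (G : Type*) [Group G] : Prop :=
  ∃ f : G →* Multiplicative ℤ, Function.Surjective f

/-- An infinite virtually cyclic group is of type II if it admits a surjective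
homomorphism onto the infinite dihedral group D∞. -/
def IsTypeII (G : Type*) [Group G] : Prop :=
  ∃ f : G →* DihedralGroup 0, Function.Surjective f

/-- An infinite virtually cyclic group of type II admits no surjective homomorphism onto ℤ:
no infinite virtually cyclic group is both of type I and of type II. -/
theorem typeII_not_typeI (V : Type*) [Group V] [Infinite V] (hV : VirtuallyCyclic V)
    (hII : IsTypeII V) : ¬ IsTypeI V := by
  rintro ⟨f, hf⟩
  obtain ⟨g, hg⟩ := hII
  obtain ⟨H, hcyc, hfi⟩ := hV
  obtain ⟨c, hc⟩ := hcyc.exists_generator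
  -- f(c) ≠ 1
  have hne : f (c : V) ≠ 1 := by
    intro h1
    have hH : H ≤ f.ker := by
      intro x hx
      obtain ⟨m, hm⟩ := hc ⟨x, hx⟩
      have hxm : x = (c : V) ^ m := by
        have := congrArg (Subtype.val) hm
        simpa using this.symm
      simp [MonoidHom.mem_ker, hxm, map_zpow, h1]
    have : f.ker.FiniteIndex := Subgroup.finiteIndex_of_le hH
    have : Finite (V ⧸ f.ker) := Subgroup.finite_quotient_of_finiteIndex
    have e := QuotientGroup.quotientKerEquivOfSurjective f hf
    haveI : Finite (Multiplicative ℤ) := Finite.of_equiv _ e.toEquiv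
    exact not_finite (Multiplicative ℤ)
  -- ker f ⊓ H = ⊥
  have hbot : f.ker ⊓ H = ⊥ := by
    rw [Subgroup.eq_bot_iff_forall]
    rintro x ⟨hxk, hxH⟩
    obtain ⟨m, hm⟩ := hc ⟨x, hxH⟩
    have hxm : x = (c : V) ^ m := by
      have := congrArg (Subtype.val) hm
      simpa using this.symm
    have : (f (c : V)) ^ m = 1 := by
      rw [← map_zpow, ← hxm]; exact hxk
    have hm0 : m = 0 := by
      have h2 : m • (Multiplicative.toAdd (f (c : V))) = 0 := by
        rw [← toAdd_zpow, this, toAdd_one]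
      rcases smul_eq_zero.mp h2 with h | h
      · exact h
      · exact absurd (by rw [← ofAdd_toAdd (f (c:V)), h, ofAdd_zero]) hne
    rw [hxm, hm0, zpow_zero]
  -- ker f is finite
  have hfin : Finite f.ker := by
    have : Function.Injective (fun k : f.ker => QuotientGroup.mk (s := H) (k : V)) := by
      intro k₁ k₂ h
      have := QuotientGroup.eq.mp h
      have hk : ((k₁ : V)⁻¹ * k₂) ∈ f.ker ⊓ H :=
        ⟨f.ker.mul_mem (f.ker.inv_mem k₁.2) k₂.2, this⟩
      rw [hbot, Subgroup.mem_bot] at hk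
      ext
      exact (inv_mul_eq_one.mp hk)
    exact Finite.of_injective _ this
  -- elements mapping to r 1 and sr 0
  obtain ⟨v, hv⟩ := hg (DihedralGroup.r 1)
  obtain ⟨w, hw⟩ := hg (DihedralGroup.sr 0)
  set x := v * w * v⁻¹ * w⁻¹ with hx
  have hxker : x ∈ f.ker := by
    simp only [MonoidHom.mem_ker, hx, map_mul, map_inv]
    rw [mul_comm (f v) (f w)]
    group
  have hfino : IsOfFinOrder x := by
    have : IsOfFinOrder (⟨x, hxker⟩ : f.ker) := isOfFinOrder_of_finite _
    exact (Submonoid.isOfFinOrder_coe).mpr this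
  have hgx : g x = DihedralGroup.r 2 := by
    have hinv : (DihedralGroup.sr (0 : ZMod 0))⁻¹ = DihedralGroup.sr 0 := by
      rw [inv_eq_iff_mul_eq_one, DihedralGroup.sr_mul_self]
    have hinvr : (DihedralGroup.r (1 : ZMod 0))⁻¹ = DihedralGroup.r (-1) := by
      rw [inv_eq_iff_mul_eq_one, DihedralGroup.r_mul_r, DihedralGroup.one_def]
      norm_num
    rw [hx]
    simp only [map_mul, map_inv, hv, hw, hinv, hinvr,
      DihedralGroup.r_mul_sr, DihedralGroup.sr_mul_r, DihedralGroup.sr_mul_sr]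
    norm_num
  have hr2 : IsOfFinOrder (DihedralGroup.r (2 : ZMod 0)) := by
    rw [← hgx]; exact g.isOfFinOrder hfino
  have hr1 : IsOfFinOrder (DihedralGroup.r (1 : ZMod 0)) := by
    refine IsOfFinOrder.of_pow (n := 2) ?_ two_ne_zero
    rw [DihedralGroup.r_one_pow]
    exact_mod_cast hr2
  exact absurd (DihedralGroup.orderOf_r_one (n := 0)) hr1.orderOf_pos.ne'
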